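/- For every threshold τ > 0, define T_τ : [0, 1] → ℝ by T_τ(t) = Φ̄_τ(0) − inf_{u ∈ ℝ} ( ((1 − t)/2) · Φ̄_τ(−u) + ((1 + t)/2) · Φ̄_τ(u) ). Then T_τ satisfies the linear lower bound T_τ(t) ≥ τ·t for all t ∈ [0, 1], and T_τ(0) = 0. -/

import Mathlib

/-- The generalized linear-core surrogate `Φ̄_τ` with threshold `τ > 0`. -/
noncomputable def barPhiTau (Φ : ℝ → ℝ) (τ : ℝ) (u : ℝ) : ℝ :=
  if τ < u then Φ (τ - u) / deriv Φ 0
  else if u < -τ then Φ (-τ - u) / deriv Φ 0 + 2 * τ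
  else -u + τ + Φ 0 / deriv Φ 0

/-- The transformation
`T_τ(t) = Φ̄_τ(0) - inf_u ((1-t)/2 · Φ̄_τ(-u) + (1+t)/2 · Φ̄_τ(u))`. -/
noncomputable def Ttau (Φ : ℝ → ℝ) (τ : ℝ) (t : ℝ) : ℝ :=
  barPhiTau Φ τ 0 -
    ⨅ u : ℝ, ((1 - t) / 2 * barPhiTau Φ τ (-u) + (1 + t) / 2 * barPhiTau Φ τ u)

lemma barPhiTau_nonneg (Φ : ℝ → ℝ) (τ : ℝ) (hτ : 0 < τ)
    (hnn : ∀ u, 0 ≤ Φ u) (hd0 : 0 < deriv Φ 0) (u : ℝ) :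
    0 ≤ barPhiTau Φ τ u := by
  unfold barPhiTau
  split_ifs with h1 h2
  · exact div_nonneg (hnn _) hd0.le
  · have : (0:ℝ) ≤ Φ (-τ - u) / deriv Φ 0 := div_nonneg (hnn _) hd0.le
    nlinarith
  · push_neg at h1
    have : (0:ℝ) ≤ Φ 0 / deriv Φ 0 := div_nonneg (hnn _) hd0.le
    nlinarith

lemma barPhiTau_zero (Φ : ℝ → ℝ) (τ : ℝ) (hτ : 0 < τ) :
    barPhiTau Φ τ 0 = τ + Φ 0 / deriv Φ 0 := by
  unfold barPhiTau
  rw [if_neg (by linarith), if_neg (by linarith)]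
  ring

lemma barPhiTau_tau (Φ : ℝ → ℝ) (τ : ℝ) (hτ : 0 < τ) :
    barPhiTau Φ τ τ = Φ 0 / deriv Φ 0 := by
  unfold barPhiTau
  rw [if_neg (by linarith), if_neg (by linarith)]
  ring

lemma barPhiTau_neg_tau (Φ : ℝ → ℝ) (τ : ℝ) (hτ : 0 < τ) :
    barPhiTau Φ τ (-τ) = 2 * τ + Φ 0 / deriv Φ 0 := by
  unfold barPhiTau
  rw [if_neg (by linarith), if_neg (by linarith)]
  ring

lemma midpoint_ineq (Φ : ℝ → ℝ) (hconv : ConvexOn ℝ Set.univ Φ) (a : ℝ) :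
    Φ 0 ≤ (Φ a + Φ (-a)) / 2 := by
  have := hconv.2 (Set.mem_univ a) (Set.mem_univ (-a))
    (by norm_num : (0:ℝ) ≤ 1/2) (by norm_num : (0:ℝ) ≤ 1/2) (by norm_num)
  simp only [smul_eq_mul] at this
  have h0 : (1/2 : ℝ) * a + 1/2 * (-a) = 0 := by ring
  rw [h0] at this
  linarith

/-- for every `τ > 0`, `T_τ(t) ≥ τ·t` for all `t ∈ [0, 1]`, and
`T_τ(0) = 0`. -/
theorem Ttau_linear_lower_bound (Φ : ℝ → ℝ)
    (hconv : ConvexOn ℝ Set.univ Φ) (hdiff : Differentiable ℝ Φ)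
    (hnn : ∀ u, 0 ≤ Φ u) (hd0 : 0 < deriv Φ 0)
    (τ : ℝ) (hτ : 0 < τ) :
    (∀ t ∈ Set.Icc (0 : ℝ) 1, τ * t ≤ Ttau Φ τ t) ∧ Ttau Φ τ 0 = 0 := by
  set d := deriv Φ 0 with hd
  set c := Φ 0 / d with hc
  have hc0 : 0 ≤ c := div_nonneg (hnn _) hd0.le
  constructor
  · intro t ht
    obtain ⟨ht0, ht1⟩ := ht
    have hbdd : BddBelow (Set.range fun u : ℝ =>
        (1 - t) / 2 * barPhiTau Φ τ (-u) + (1 + t) / 2 * barPhiTau Φ τ u) := by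
      refine ⟨0, ?_⟩
      rintro y ⟨u, rfl⟩
      have h1 := barPhiTau_nonneg Φ τ hτ hnn hd0 (-u)
      have h2 := barPhiTau_nonneg Φ τ hτ hnn hd0 u
      have : (0:ℝ) ≤ (1 - t) / 2 := by linarith
      have : (0:ℝ) ≤ (1 + t) / 2 := by linarith
      positivity
    have hle := ciInf_le hbdd τ
    have hval : (1 - t) / 2 * barPhiTau Φ τ (-τ) + (1 + t) / 2 * barPhiTau Φ τ τ
        = (1 - t) * τ + c := by
      rw [barPhiTau_tau Φ τ hτ, barPhiTau_neg_tau Φ τ hτ, ← hd, ← hc]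
      ring
    rw [hval] at hle
    unfold Ttau
    rw [barPhiTau_zero Φ τ hτ, ← hd, ← hc]
    linarith
  · unfold Ttau
    rw [barPhiTau_zero Φ τ hτ, ← hd, ← hc]
    have hinf : (⨅ u : ℝ, ((1 - (0:ℝ)) / 2 * barPhiTau Φ τ (-u)
        + (1 + (0:ℝ)) / 2 * barPhiTau Φ τ u)) = τ + c := by
      apply le_antisymm
      · have hbdd : BddBelow (Set.range fun u : ℝ =>
            (1 - (0:ℝ)) / 2 * barPhiTau Φ τ (-u) + (1 + (0:ℝ)) / 2 * barPhiTau Φ τ u) := by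
          refine ⟨0, ?_⟩
          rintro y ⟨u, rfl⟩
          have h1 := barPhiTau_nonneg Φ τ hτ hnn hd0 (-u)
          have h2 := barPhiTau_nonneg Φ τ hτ hnn hd0 u
          positivity
        have h0 := ciInf_le hbdd (0:ℝ)
        have hv : (1 - (0:ℝ)) / 2 * barPhiTau Φ τ (-0) + (1 + (0:ℝ)) / 2 * barPhiTau Φ τ 0
            = τ + c := by
          rw [neg_zero, barPhiTau_zero Φ τ hτ, ← hd, ← hc]; ring
        rw [hv] at h0
        exact h0
      · apply le_ciInf
        intro u
        have key : τ + c ≤ 1 / 2 * barPhiTau Φ τ (-u) + 1 / 2 * barPhiTau Φ τ u := by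
          rcases lt_trichotomy τ u with h | h | h
          · -- u > τ : barPhi u = Φ(τ-u)/d, barPhi(-u) = Φ(-τ+u)/d + 2τ
            have hu : barPhiTau Φ τ u = Φ (τ - u) / d := by
              unfold barPhiTau; rw [if_pos h]
            have hnu : barPhiTau Φ τ (-u) = Φ (-τ + u) / d + 2 * τ := by
              unfold barPhiTau
              rw [if_neg (by linarith), if_pos (by linarith),
                show -τ - -u = -τ + u by ring]
            have hmid := midpoint_ineq Φ hconv (τ - u)
            have heq : -(τ - u) = -τ + u := by ring
            rw [heq] at hmid
            have h2 : Φ 0 / d ≤ (Φ (τ - u) + Φ (-τ + u)) / (2 * d) := by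
              rw [div_le_div_iff₀ hd0 (by positivity)]
              nlinarith
            have heq2 : 1 / 2 * (Φ (-τ + u) / d + 2 * τ) + 1 / 2 * (Φ (τ - u) / d)
                = (Φ (τ - u) + Φ (-τ + u)) / (2 * d) + τ := by
              field_simp
              ring
            rw [hu, hnu, hc, heq2]
            linarith
          · -- u = τ
            subst h
            rw [barPhiTau_tau Φ τ hτ, barPhiTau_neg_tau Φ τ hτ, ← hd, ← hc]
            linarith
          · rcases lt_trichotomy u (-τ) with h' | h' | h'
            · -- u < -τ
              have hu : barPhiTau Φ τ u = Φ (-τ - u) / d + 2 * τ := by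
                unfold barPhiTau
                rw [if_neg (by linarith), if_pos h']
              have hnu : barPhiTau Φ τ (-u) = Φ (τ + u) / d := by
                unfold barPhiTau
                rw [if_pos (by linarith)]
                ring_nf
                rw [hd]
              have hmid := midpoint_ineq Φ hconv (τ + u)
              have heq : -(τ + u) = -τ - u := by ring
              rw [heq] at hmid
              rw [hu, hnu, hc]
              have h2 : Φ 0 / d ≤ (Φ (τ + u) + Φ (-τ - u)) / (2 * d) := by
                rw [div_le_div_iff₀ hd0 (by positivity)]
                nlinarith
              rw [div_le_div_iff₀ hd0 (by positivity)] at h2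
              have : Φ 0 / d ≤ (Φ (τ + u) / d + Φ (-τ - u) / d) / 2 := by
                rw [← add_div, div_div]
                rw [div_le_div_iff₀ hd0 (by positivity)]
                nlinarith
              linarith
            · subst h'
              rw [neg_neg, barPhiTau_tau Φ τ hτ, barPhiTau_neg_tau Φ τ hτ, ← hd, ← hc]
              linarith
            ·
              have hu : barPhiTau Φ τ u = -u + τ + c := by
                unfold barPhiTau
                rw [if_neg (by linarith), if_neg (by linarith), ← hd, ← hc]
              have hnu : barPhiTau Φ τ (-u) = u + τ + c := by
                unfold barPhiTau
                rw [if_neg (by linarith), if_neg (by linarith), ← hd, ← hc]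
                ring
              rw [hu, hnu]
              linarith
        calc τ + c ≤ 1 / 2 * barPhiTau Φ τ (-u) + 1 / 2 * barPhiTau Φ τ u := key
          _ = (1 - (0:ℝ)) / 2 * barPhiTau Φ τ (-u) + (1 + (0:ℝ)) / 2 * barPhiTau Φ τ u := by
              ring
    rw [hinf]
    ring
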